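/- Let Θ* be a symmetric positive definite d×d matrix, let Θ be a symmetric positive semidefinite d×d matrix with Θ ⪯ Θ*, and let H be a symmetric d×d matrix. Then ‖Θ^{1/2}HΘ^{1/2}‖ ≤ ‖(Θ*)^{1/2}H(Θ*)^{1/2}‖ and ‖Θ^{1/2}HΘ^{1/2}‖_F ≤ ‖(Θ*)^{1/2}H(Θ*)^{1/2}‖_F. -/

import Mathlib

open Matrix

/-- The spectral norm of a square real matrix. -/
noncomputable def specNorm {d : ℕ} (M : Matrix (Fin d) (Fin d) ℝ) : ℝ :=
  ‖Matrix.toEuclideanCLM (𝕜 := ℝ) M‖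

/-- The Frobenius norm of a square real matrix. -/
noncomputable def frobNorm {d : ℕ} (M : Matrix (Fin d) (Fin d) ℝ) : ℝ :=
  Real.sqrt (∑ i, ∑ j, (M i j)^2)

noncomputable def Matrix.PosSemidef.sqrt {n 𝕜 : Type*} [Fintype n] [DecidableEq n] [RCLike 𝕜]
    [PartialOrder 𝕜]
    {A : Matrix n n 𝕜} (hA : A.PosSemidef) : Matrix n n 𝕜 :=
  hA.1.eigenvectorUnitary.1 * diagonal ((↑) ∘ (√·) ∘ hA.1.eigenvalues) *
    (star hA.1.eigenvectorUnitary : Matrix n n 𝕜)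

lemma Matrix.PosSemidef.posSemidef_sqrt {d : ℕ} {A : Matrix (Fin d) (Fin d) ℝ}
    (hA : A.PosSemidef) : hA.sqrt.PosSemidef := by
  unfold Matrix.PosSemidef.sqrt
  refine PosSemidef.mul_mul_conjTranspose_same (posSemidef_diagonal_iff.mpr fun i => ?_) _
  simp [Real.sqrt_nonneg]

lemma Matrix.PosSemidef.sqrt_mul_self {d : ℕ} {A : Matrix (Fin d) (Fin d) ℝ}
    (hA : A.PosSemidef) : hA.sqrt * hA.sqrt = A := by
  unfold Matrix.PosSemidef.sqrt
  have hU : (star hA.1.eigenvectorUnitary : Matrix (Fin d) (Fin d) ℝ) *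
      (hA.1.eigenvectorUnitary : Matrix (Fin d) (Fin d) ℝ) = 1 :=
    Unitary.coe_star_mul_self _
  conv_rhs => rw [hA.1.spectral_theorem, Unitary.conjStarAlgAut_apply]
  calc _ = (hA.1.eigenvectorUnitary : Matrix (Fin d) (Fin d) ℝ) *
        (diagonal (RCLike.ofReal ∘ (√·) ∘ hA.1.eigenvalues) *
          ((star hA.1.eigenvectorUnitary : Matrix (Fin d) (Fin d) ℝ) *
            (hA.1.eigenvectorUnitary : Matrix (Fin d) (Fin d) ℝ)) *
          diagonal (RCLike.ofReal ∘ (√·) ∘ hA.1.eigenvalues)) *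
        (star hA.1.eigenvectorUnitary : Matrix (Fin d) (Fin d) ℝ) := by
        simp only [Matrix.mul_assoc]
    _ = _ := by
      rw [hU, Matrix.mul_one, diagonal_mul_diagonal]
      congr 3
      funext i
      simp [Real.mul_self_sqrt (hA.eigenvalues_nonneg i)]

open scoped Matrix.Norms.L2Operator

namespace Stmt14Aux

lemma quadform {d : ℕ} (A : Matrix (Fin d) (Fin d) ℝ) (x : EuclideanSpace ℝ (Fin d)) :
    ‖toEuclideanCLM (𝕜 := ℝ) A x‖^2
      = (WithLp.equiv 2 _ x) ⬝ᵥ ((Aᵀ*A) *ᵥ (WithLp.equiv 2 _ x)) := by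
  set v := WithLp.equiv 2 _ x with hv
  have h := Matrix.ofLp_toEuclideanCLM (𝕜 := ℝ) A x
  rw [← real_inner_self_eq_norm_sq, PiLp.inner_apply]
  simp only [RCLike.inner_apply, starRingEnd_apply, star_trivial]
  have hc : ∀ i, (toEuclideanCLM (𝕜 := ℝ) A x) i = (A *ᵥ v) i := fun i => congrFun h i
  simp_rw [hc]
  rw [← Matrix.mulVec_mulVec, Matrix.dotProduct_mulVec, Matrix.vecMul_transpose]
  rfl

lemma psd_quad_nonneg {d : ℕ} {P : Matrix (Fin d) (Fin d) ℝ} (hP : P.PosSemidef)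
    (v : Fin d → ℝ) : 0 ≤ v ⬝ᵥ (P *ᵥ v) := by
  have := hP.dotProduct_mulVec_nonneg v
  rwa [star_trivial] at this

lemma quad_mono {d : ℕ} {P Q : Matrix (Fin d) (Fin d) ℝ} (h : (Q - P).PosSemidef)
    (v : Fin d → ℝ) : v ⬝ᵥ (P *ᵥ v) ≤ v ⬝ᵥ (Q *ᵥ v) := by
  have := psd_quad_nonneg h v
  rw [Matrix.sub_mulVec, dotProduct_sub] at this
  linarith

lemma herm_transpose {d : ℕ} {A : Matrix (Fin d) (Fin d) ℝ} (hA : A.IsHermitian) : Aᵀ = A := by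
  rw [← Matrix.conjTranspose_eq_transpose_of_trivial]; exact hA

lemma spec_mono_psd {d : ℕ} {P Q : Matrix (Fin d) (Fin d) ℝ} (hP : P.PosSemidef)
    (hQ : Q.PosSemidef) (h : (Q - P).PosSemidef) : ‖P‖ ≤ ‖Q‖ := by
  have key : ‖hP.sqrt‖ ≤ ‖hQ.sqrt‖ := by
    rw [Matrix.cstar_norm_def, Matrix.cstar_norm_def]
    apply ContinuousLinearMap.opNorm_le_bound _ (norm_nonneg _)
    intro x
    have h1 := quadform hP.sqrt x
    have h2 := quadform hQ.sqrt x
    rw [herm_transpose hP.posSemidef_sqrt.1, hP.sqrt_mul_self] at h1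
    rw [herm_transpose hQ.posSemidef_sqrt.1, hQ.sqrt_mul_self] at h2
    have h3 : ‖toEuclideanCLM (𝕜 := ℝ) hP.sqrt x‖^2 ≤ ‖toEuclideanCLM (𝕜 := ℝ) hQ.sqrt x‖^2 := by
      rw [h1, h2]; exact quad_mono h _
    have h4 : ‖toEuclideanCLM (𝕜 := ℝ) hQ.sqrt x‖ ≤ ‖toEuclideanCLM (𝕜 := ℝ) hQ.sqrt‖ * ‖x‖ :=
      ContinuousLinearMap.le_opNorm _ x
    nlinarith [norm_nonneg (toEuclideanCLM (𝕜 := ℝ) hP.sqrt x),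
      norm_nonneg (toEuclideanCLM (𝕜 := ℝ) hQ.sqrt x)]
  calc ‖P‖ = ‖hP.sqrt * hP.sqrtᴴ‖ := by
        rw [Matrix.conjTranspose_eq_transpose_of_trivial, herm_transpose hP.posSemidef_sqrt.1,
          hP.sqrt_mul_self]
    _ = ‖hP.sqrt‖ * ‖hP.sqrt‖ := CStarRing.norm_self_mul_star
    _ ≤ ‖hQ.sqrt‖ * ‖hQ.sqrt‖ := by
        have := norm_nonneg hP.sqrt; nlinarith [norm_nonneg hQ.sqrt]
    _ = ‖hQ.sqrt * hQ.sqrtᴴ‖ := CStarRing.norm_self_mul_star.symm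
    _ = ‖Q‖ := by
        rw [Matrix.conjTranspose_eq_transpose_of_trivial, herm_transpose hQ.posSemidef_sqrt.1,
          hQ.sqrt_mul_self]

lemma frob_trace {d : ℕ} (M : Matrix (Fin d) (Fin d) ℝ) :
    ∑ i, ∑ j, (M i j)^2 = Matrix.trace (Mᵀ * M) := by
  rw [Matrix.trace]
  simp only [Matrix.diag_apply, Matrix.mul_apply, Matrix.transpose_apply]
  rw [Finset.sum_comm]
  simp [sq]

lemma trace_psd_nonneg {d : ℕ} {X : Matrix (Fin d) (Fin d) ℝ} (hX : X.PosSemidef) :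
    0 ≤ Matrix.trace X := by
  apply Finset.sum_nonneg
  intro i _
  have := hX.dotProduct_mulVec_nonneg (Pi.single i 1)
  simpa [dotProduct_single, Matrix.mulVec_single] using this

lemma trace_mul_psd_nonneg {d : ℕ} {X Y : Matrix (Fin d) (Fin d) ℝ} (hX : X.PosSemidef)
    (hY : Y.PosSemidef) : 0 ≤ Matrix.trace (X * Y) := by
  have h1 : X * Y = hX.sqrt * (hX.sqrt * Y) := by
    rw [← Matrix.mul_assoc, hX.sqrt_mul_self]
  rw [h1, Matrix.trace_mul_comm]
  have h2 : (hX.sqrt * Y * hX.sqrt).PosSemidef := by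
    have := hY.conjTranspose_mul_mul_same hX.sqrt
    rwa [hX.posSemidef_sqrt.1.eq] at this
  exact trace_psd_nonneg h2

end Stmt14Aux

open Stmt14Aux in
theorem stmt14 {d : ℕ} (Θs Θ H : Matrix (Fin d) (Fin d) ℝ) (hΘs : Θs.PosDef)
    (hΘ : Θ.PosSemidef) (hle : (Θs - Θ).PosSemidef) (hH : H.IsSymm) :
    specNorm (hΘ.sqrt * H * hΘ.sqrt) ≤
      specNorm (hΘs.posSemidef.sqrt * H * hΘs.posSemidef.sqrt) ∧
    frobNorm (hΘ.sqrt * H * hΘ.sqrt) ≤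
      frobNorm (hΘs.posSemidef.sqrt * H * hΘs.posSemidef.sqrt) := by
  set S := hΘ.sqrt with hSdef
  set T := hΘs.posSemidef.sqrt with hTdef
  have hSsym : Sᵀ = S := herm_transpose hΘ.posSemidef_sqrt.1
  have hTsym : Tᵀ = T := herm_transpose hΘs.posSemidef.posSemidef_sqrt.1
  have hSS : S * S = Θ := hΘ.sqrt_mul_self
  have hTT : T * T = Θs := hΘs.posSemidef.sqrt_mul_self
  have hHsym : Hᵀ = H := hH
  -- invertibility of T
  have hdet : IsUnit T.det := by
    have h1 : T.det * T.det = Θs.det := by rw [← Matrix.det_mul, hTT]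
    have h2 : Θs.det ≠ 0 := ne_of_gt hΘs.det_pos
    refine isUnit_iff_ne_zero.mpr fun h0 => h2 ?_
    rw [← h1, h0, mul_zero]
  have hTinv : T * T⁻¹ = 1 := Matrix.mul_nonsing_inv T hdet
  have hinvT : T⁻¹ * T = 1 := Matrix.nonsing_inv_mul T hdet
  have hTinvSym : (T⁻¹)ᵀ = T⁻¹ := by rw [Matrix.transpose_nonsing_inv, hTsym]
  set K := T⁻¹ * S with hKdef
  have hTK : T * K = S := by rw [hKdef, ← Matrix.mul_assoc, hTinv, Matrix.one_mul]
  have hKT : Kᵀ * T = S := by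
    have := congrArg Matrix.transpose hTK
    rwa [Matrix.transpose_mul, hTsym, hSsym] at this
  have hfact : S * H * S = Kᵀ * (T * H * T) * K := by
    calc S * H * S = (Kᵀ * T) * H * (T * K) := by rw [hKT, hTK]
      _ = Kᵀ * (T * H * T) * K := by simp only [Matrix.mul_assoc]
  -- ‖K‖ ≤ 1
  have hKKt : K * Kᴴ = T⁻¹ * Θ * T⁻¹ := by
    rw [Matrix.conjTranspose_eq_transpose_of_trivial, hKdef, Matrix.transpose_mul, hSsym, hTinvSym]
    calc T⁻¹ * S * (S * T⁻¹) = T⁻¹ * (S * S) * T⁻¹ := by simp only [Matrix.mul_assoc]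
      _ = T⁻¹ * Θ * T⁻¹ := by rw [hSS]
  have hPpsd : (T⁻¹ * Θ * T⁻¹).PosSemidef := by
    have := hΘ.conjTranspose_mul_mul_same (T⁻¹)
    rwa [Matrix.conjTranspose_eq_transpose_of_trivial, hTinvSym] at this
  have hone : T⁻¹ * Θs * T⁻¹ = 1 := by
    rw [← hTT]
    calc T⁻¹ * (T * T) * T⁻¹ = (T⁻¹ * T) * (T * T⁻¹) := by simp only [Matrix.mul_assoc]
      _ = 1 := by rw [hinvT, hTinv, Matrix.one_mul]
  have hsub : ((1 : Matrix (Fin d) (Fin d) ℝ) - T⁻¹ * Θ * T⁻¹).PosSemidef := by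
    have h1 : (1 : Matrix (Fin d) (Fin d) ℝ) - T⁻¹ * Θ * T⁻¹ = T⁻¹ * (Θs - Θ) * T⁻¹ := by
      rw [← hone, Matrix.mul_sub, Matrix.sub_mul]
    rw [h1]
    have := hle.conjTranspose_mul_mul_same (T⁻¹)
    rwa [Matrix.conjTranspose_eq_transpose_of_trivial, hTinvSym] at this
  have hnorm1 : ‖(1 : Matrix (Fin d) (Fin d) ℝ)‖ ≤ 1 := by
    rw [Matrix.cstar_norm_def, _root_.map_one]
    exact ContinuousLinearMap.norm_id_le
  have hKle : ‖K‖ ≤ 1 := by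
    have h1 : ‖K‖ * ‖K‖ = ‖K * Kᴴ‖ := CStarRing.norm_self_mul_star.symm
    have h2 : ‖K * Kᴴ‖ ≤ 1 := by
      rw [hKKt]
      exact le_trans (spec_mono_psd hPpsd Matrix.PosSemidef.one hsub) hnorm1
    nlinarith [norm_nonneg K]
  have hKtle : ‖Kᵀ‖ ≤ 1 := by
    rw [← Matrix.conjTranspose_eq_transpose_of_trivial, Matrix.l2_opNorm_conjTranspose]
    exact hKle
  constructor
  · -- spectral norm
    show ‖S * H * S‖ ≤ ‖T * H * T‖
    rw [hfact]
    calc ‖Kᵀ * (T * H * T) * K‖ ≤ ‖Kᵀ * (T * H * T)‖ * ‖K‖ := norm_mul_le _ _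
      _ ≤ ‖Kᵀ‖ * ‖T * H * T‖ * ‖K‖ := by
          have := norm_mul_le Kᵀ (T * H * T)
          nlinarith [norm_nonneg K]
      _ ≤ ‖T * H * T‖ * ‖K‖ := by
          have h5 : ‖Kᵀ‖ * ‖T * H * T‖ ≤ ‖T * H * T‖ :=
            mul_le_of_le_one_left (norm_nonneg _) hKtle
          exact mul_le_mul_of_nonneg_right h5 (norm_nonneg _)
      _ ≤ ‖T * H * T‖ := mul_le_of_le_one_right (norm_nonneg _) hKle
  · -- Frobenius norm
    unfold frobNorm
    apply Real.sqrt_le_sqrt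
    rw [frob_trace, frob_trace]
    have hMsym : (S * H * S)ᵀ = S * H * S := by
      rw [Matrix.transpose_mul, Matrix.transpose_mul, hSsym, hHsym, Matrix.mul_assoc]
    have hNsym : (T * H * T)ᵀ = T * H * T := by
      rw [Matrix.transpose_mul, Matrix.transpose_mul, hTsym, hHsym, Matrix.mul_assoc]
    rw [hMsym, hNsym]
    have hX1 : (H * Θ * H).PosSemidef := by
      have := hΘ.conjTranspose_mul_mul_same H
      rwa [Matrix.conjTranspose_eq_transpose_of_trivial, hHsym] at this
    have hX2 : (H * Θs * H).PosSemidef := by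
      have := hΘs.posSemidef.conjTranspose_mul_mul_same H
      rwa [Matrix.conjTranspose_eq_transpose_of_trivial, hHsym] at this
    have e1 : Matrix.trace ((S * H * S) * (S * H * S)) = Matrix.trace ((H * Θ * H) * Θ) := by
      have h1 : (S * H * S) * (S * H * S) = S * ((H * Θ * H) * S) := by
        rw [← hSS]; simp only [Matrix.mul_assoc]
      have h2 : ((H * Θ * H) * S) * S = (H * Θ * H) * Θ := by
        rw [Matrix.mul_assoc, hSS]
      rw [h1, Matrix.trace_mul_comm, h2]
    have e4 : Matrix.trace ((T * H * T) * (T * H * T)) = Matrix.trace ((H * Θs * H) * Θs) := by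
      have h1 : (T * H * T) * (T * H * T) = T * ((H * Θs * H) * T) := by
        rw [← hTT]; simp only [Matrix.mul_assoc]
      have h2 : ((H * Θs * H) * T) * T = (H * Θs * H) * Θs := by
        rw [Matrix.mul_assoc, hTT]
      rw [h1, Matrix.trace_mul_comm, h2]
    have i1 : Matrix.trace ((H * Θ * H) * Θ) ≤ Matrix.trace ((H * Θ * H) * Θs) := by
      have := trace_mul_psd_nonneg hX1 hle
      rw [Matrix.mul_sub, Matrix.trace_sub] at this
      linarith
    have e2 : Matrix.trace ((H * Θ * H) * Θs) = Matrix.trace ((H * Θs * H) * Θ) := by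
      have h1 : (H * Θ * H) * Θs = (H * Θ) * (H * Θs) := by simp only [Matrix.mul_assoc]
      have h2 : (H * Θs * H) * Θ = (H * Θs) * (H * Θ) := by simp only [Matrix.mul_assoc]
      rw [h1, h2, Matrix.trace_mul_comm]
    have i3 : Matrix.trace ((H * Θs * H) * Θ) ≤ Matrix.trace ((H * Θs * H) * Θs) := by
      have := trace_mul_psd_nonneg hX2 hle
      rw [Matrix.mul_sub, Matrix.trace_sub] at this
      linarith
    rw [e1, e4]
    linarith
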